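/- For the turn-based operational semantics of binary session types, the success-reaching characterization of compliance holds: P ⊣ Q (i.e., every maximal reduction of P ∥ Q in the standard semantics ends with the client equal to ✓) if and only if every maximal turn-based reduction P ∥ Q ⟹* P' ∥ Q' ⟹̸ has P' = 0. -/

import Mathlib

namespace ESC

/-- Labelled event structure data: events, conflict, enabling, labelling (relational). -/
structure LES (Ev Act : Type) where
  events : Set Ev
  conf : Ev → Ev → Prop
  enab : Set Ev → Ev → Prop
  lab : Ev → Act → Prop

/-- Conflict-freeness of a set of events. -/
def CF {Ev : Type} (C : Ev → Ev → Prop) (X : Set Ev) : Prop :=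
  ∀ e ∈ X, ∀ e' ∈ X, ¬ C e e'

/-- Well-formedness: irreflexive symmetric conflict, saturated enabling over
finite conflict-free subsets, labelling a (partial) function on events. -/
structure IsES {Ev Act : Type} (E : LES Ev Act) : Prop where
  conf_mem : ∀ e e', E.conf e e' → e ∈ E.events ∧ e' ∈ E.events
  conf_irrefl : ∀ e, ¬ E.conf e e
  conf_symm : ∀ e e', E.conf e e' → E.conf e' e
  enab_dom : ∀ X e, E.enab X e → X ⊆ E.events ∧ e ∈ E.events ∧ X.Finite ∧ CF E.conf X
  saturated : ∀ X Y e, E.enab X e → X ⊆ Y → Y ⊆ E.events → Y.Finite → CF E.conf Y → E.enab Y e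
  lab_dom : ∀ e a, E.lab e a → e ∈ E.events
  lab_fun : ∀ e a b, E.lab e a → E.lab e b → a = b
  lab_total : ∀ e ∈ E.events, ∃ a, E.lab e a

/-- The order ⊴ on event structures. -/
def leES {Ev Act : Type} (E E' : LES Ev Act) : Prop :=
  E.events ⊆ E'.events ∧
  (∀ e e', E.conf e e' → E'.conf e e') ∧
  (∀ X e, E.enab X e → E'.enab X e) ∧
  (∀ e ∈ E.events, ∀ a, E.lab e a ↔ E'.lab e a) ∧
  (∀ e e', e ∈ E.events → e' ∈ E.events → E'.conf e e' → E.conf e e') ∧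
  (∀ X e, X ⊆ E.events → e ∈ E.events → E'.enab X e → E.enab X e)

/-- The empty event structure. -/
def emptyES {Ev Act : Type} : LES Ev Act :=
  ⟨∅, fun _ _ => False, fun _ _ => False, fun _ _ => False⟩

/-- Componentwise union of a countable family of event structures. -/
def unionES {Ev Act : Type} (c : ℕ → LES Ev Act) : LES Ev Act :=
  ⟨⋃ n, (c n).events,
   fun e e' => ∃ n, (c n).conf e e',
   fun X e => ∃ n, (c n).enab X e,
   fun e a => ∃ n, (c n).lab e a⟩

/-- Least fixed point (Kleene iteration from the empty ES). -/
def fixES {Ev Act : Type} (F : LES Ev Act → LES Ev Act) : LES Ev Act :=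
  unionES (fun n => F^[n] emptyES)

/-- Events surviving after executing `e`. -/
def remEvents {Ev Act : Type} (E : LES Ev Act) (e : Ev) : Set Ev :=
  E.events \ ({e} ∪ {e' | E.conf e e'})

/-- Remainder `E[e]` of an event structure after executing `e`. -/
def remainder {Ev Act : Type} (E : LES Ev Act) (e : Ev) : LES Ev Act where
  events := remEvents E e
  conf := fun e1 e2 => E.conf e1 e2 ∧ e1 ∈ remEvents E e ∧ e2 ∈ remEvents E e
  enab := fun X e' => ∃ Y, E.enab Y e' ∧ e' ≠ e ∧ ¬ E.conf e' e ∧ CF E.conf (Y ∪ {e}) ∧ X = Y \ {e}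
  lab := fun e' a => E.lab e' a ∧ e' ∈ remEvents E e

/-- Finite plays (as lists), via iterated remainders. -/
def isPlayL {Ev Act : Type} : LES Ev Act → List Ev → Prop
  | _, [] => True
  | E, e :: σ => E.enab ∅ e ∧ isPlayL (remainder E e) σ

/-- The set of events occurring among the first `i` positions of `σ`. -/
def prefixSet {Ev : Type} (σ : ℕ → Option Ev) (i : ℕ) : Set Ev :=
  {e | ∃ j, j < i ∧ σ j = some e}

/-- The list of the first `i` events of `σ`. -/
def prefixList {Ev : Type} (σ : ℕ → Option Ev) : ℕ → List Ev
  | 0 => []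
  | i + 1 => prefixList σ i ++ (σ i).toList

/-- The remainder of `E` after the first `i` events of `σ`. -/
def remAfter {Ev Act : Type} (E : LES Ev Act) (σ : ℕ → Option Ev) : ℕ → LES Ev Act
  | 0 => E
  | i + 1 =>
    match σ i with
    | none => remAfter E σ i
    | some e => remainder (remAfter E σ i) e

/-- Plays, possibly infinite: `σ i = none` means the play has ended before `i`. -/
def IsPlay {Ev Act : Type} (E : LES Ev Act) (σ : ℕ → Option Ev) : Prop :=
  (∀ i j, i ≤ j → σ i = none → σ j = none) ∧
  (∀ i e, σ i = some e → (remAfter E σ i).enab ∅ e)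

/-- Innocence of participant `A` in the play `σ`. -/
def Innocent {Ev Act Ppt : Type} (π : Ev → Ppt) (E : LES Ev Act) (A : Ppt)
    (σ : ℕ → Option Ev) : Prop :=
  ∀ i e, π e = A → E.enab (prefixSet σ i) e →
    ∃ j, i ≤ j ∧ ∃ e', σ j = some e' ∧ (E.conf e' e ∨ e' = e)

/-- Strategies for `A`: map finite plays to sets of `A`'s events extending the play. -/
def IsStrategy {Ev Act Ppt : Type} (π : Ev → Ppt) (E : LES Ev Act) (A : Ppt)
    (S : List Ev → Set Ev) : Prop :=
  ∀ σ, isPlayL E σ → ∀ e ∈ S σ, π e = A ∧ isPlayL E (σ ++ [e])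

/-- `σ` conforms to strategy `S` for participant `A`. -/
def Conforms {Ev Ppt : Type} (π : Ev → Ppt) (A : Ppt) (S : List Ev → Set Ev)
    (σ : ℕ → Option Ev) : Prop :=
  ∀ i e, σ i = some e → π e = A → e ∈ S (prefixList σ i)

/-- Position `j` is within the play `σ`. -/
def validPos {Ev : Type} (σ : ℕ → Option Ev) (j : ℕ) : Prop :=
  ∀ k, k < j → σ k ≠ none

/-- Fairness of `σ` w.r.t. strategy `S`: permanently prescribed events happen. -/
def FairW {Ev : Type} (S : List Ev → Set Ev) (σ : ℕ → Option Ev) : Prop :=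
  ∀ i e, validPos σ i →
    (∀ j, i ≤ j → validPos σ j → e ∈ S (prefixList σ j)) →
    ∃ h, i ≤ h ∧ σ h = some e

/-- A contract: a labelled ES plus a partial payoff assignment. -/
structure Contract (Ev Act Ppt : Type) where
  es : LES Ev Act
  payoff : Ppt → Option (Set (ℕ → Option Ev))

/-- Winning plays of `A`. -/
def Wins {Ev Act Ppt : Type} (π : Ev → Ppt) (C : Contract Ev Act Ppt) (A : Ppt)
    (σ : ℕ → Option Ev) : Prop :=
  (∃ S, C.payoff A = some S ∧ σ ∈ S ∧ ∀ B : Ppt, Innocent π C.es B σ) ∨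
  (Innocent π C.es A σ ∧ ∃ B : Ppt, B ≠ A ∧ ¬ Innocent π C.es B σ)

/-- `S` is a winning strategy for `A` in `C`. -/
def WinningFor {Ev Act Ppt : Type} (π : Ev → Ppt) (C : Contract Ev Act Ppt) (A : Ppt)
    (S : List Ev → Set Ev) : Prop :=
  IsStrategy π C.es A S ∧
  ∀ σ, IsPlay C.es σ → Conforms π A S σ → FairW S σ → Wins π C A σ

/-- The eager strategy of `A`: do all currently enabled events of `A`. -/
def eager {Ev Act Ppt : Type} (π : Ev → Ppt) (E : LES Ev Act) (A : Ppt)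
    (σ : List Ev) : Set Ev :=
  {e | π e = A ∧ E.enab {x | x ∈ σ} e}

/-- Composability of contracts: payoff domains are disjoint. -/
def Composable {Ev Act Ppt : Type} (C C' : Contract Ev Act Ppt) : Prop :=
  ∀ A : Ppt, C.payoff A = none ∨ C'.payoff A = none

/-- Plain (componentwise-union) composition of contracts. -/
def ccompU {Ev Act Ppt : Type} (C C' : Contract Ev Act Ppt) : Contract Ev Act Ppt :=
  ⟨⟨C.es.events ∪ C'.es.events,
    fun e e' => C.es.conf e e' ∨ C'.es.conf e e',
    fun X e => C.es.enab X e ∨ C'.es.enab X e,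
    fun e a => C.es.lab e a ∨ C'.es.lab e a⟩,
   fun A => (C.payoff A).orElse (fun _ => C'.payoff A)⟩

/-! ### Binary session types -/

/-- Session types (binary choices encode finite non-empty choices), extended with
committed branches `comm`, one-position buffers `buf`, and the stuck state `zero`. -/
inductive Proc (Act : Type) where
  | success : Proc Act
  | send : Act → Proc Act → Proc Act      -- ā.P as an internal branch
  | recv : Act → Proc Act → Proc Act      -- a.P as an external branch
  | ichoice : Proc Act → Proc Act → Proc Act  -- ⊕
  | echoice : Proc Act → Proc Act → Proc Act  -- +
  | var : ℕ → Proc Act                    -- de Bruijn variable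
  | recur : Proc Act → Proc Act             -- rec x.P
  | comm : Act → Proc Act → Proc Act      -- committed internal branch ā.P
  | buf : Act → Proc Act → Proc Act       -- [ā]P
  | zero : Proc Act                       -- 0

/-- Branches of an internal choice. -/
inductive IBr {Act : Type} : Proc Act → Act → Proc Act → Prop where
  | send {a P} : IBr (Proc.send a P) a P
  | il {P Q a R} : IBr P a R → IBr (Proc.ichoice P Q) a R
  | ir {P Q a R} : IBr Q a R → IBr (Proc.ichoice P Q) a R

/-- Branches of an external choice. -/
inductive EBr {Act : Type} : Proc Act → Act → Proc Act → Prop where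
  | recv {a P} : EBr (Proc.recv a P) a P
  | el {P Q a R} : EBr P a R → EBr (Proc.echoice P Q) a R
  | er {P Q a R} : EBr Q a R → EBr (Proc.echoice P Q) a R

/-- Substitution of `Q` for de Bruijn variable `k`. -/
def subst {Act : Type} (Q : Proc Act) : ℕ → Proc Act → Proc Act
  | _, .success => .success
  | k, .send a P => .send a (subst Q k P)
  | k, .recv a P => .recv a (subst Q k P)
  | k, .ichoice P1 P2 => .ichoice (subst Q k P1) (subst Q k P2)
  | k, .echoice P1 P2 => .echoice (subst Q k P1) (subst Q k P2)
  | k, .var m => if m = k then Q else .var m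
  | k, .recur P => .recur (subst Q (k+1) P)
  | k, .comm a P => .comm a (subst Q k P)
  | k, .buf a P => .buf a (subst Q k P)
  | _, .zero => .zero

/-- Standard (reduction) semantics of compositions `P ∥ Q`. -/
inductive Step {Act : Type} : Proc Act × Proc Act → Proc Act × Proc Act → Prop where
  | commitL {P P' Q : Proc Act} {a : Act} : IBr P a P' → Step (P, Q) (Proc.comm a P', Q)
  | commitR {P Q Q' : Proc Act} {a : Act} : IBr Q a Q' → Step (P, Q) (P, Proc.comm a Q')
  | unfoldL {P Q : Proc Act} : Step (Proc.recur P, Q) (subst (Proc.recur P) 0 P, Q)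
  | unfoldR {P Q : Proc Act} : Step (P, Proc.recur Q) (P, subst (Proc.recur Q) 0 Q)
  | syncL {P Q Q' : Proc Act} {a : Act} : EBr Q a Q' → Step (Proc.comm a P, Q) (P, Q')
  | syncR {P P' Q : Proc Act} {a : Act} : EBr P a P' → Step (P, Proc.comm a Q) (P', Q)

/-- A stuck configuration. -/
def Stuck {Act : Type} (c : Proc Act × Proc Act) : Prop := ∀ c', ¬ Step c c'

/-- Compliance: every reachable stuck configuration has the client succeeded. -/
def Compliant {Act : Type} (P Q : Proc Act) : Prop :=
  ∀ c, Relation.ReflTransGen Step (P, Q) c → Stuck c → c.1 = Proc.success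

/-- Well-formed session types: `WF n U P` means free variables are `< n` and
variables satisfying `¬ U` may only occur guarded (under a prefix). -/
inductive WF {Act : Type} : ℕ → (ℕ → Prop) → Proc Act → Prop where
  | success {n U} : WF n U (Proc.success : Proc Act)
  | send {n U} {a : Act} {P} : WF n (fun _ => True) P → WF n U (Proc.send a P)
  | recv {n U} {a : Act} {P} : WF n (fun _ => True) P → WF n U (Proc.recv a P)
  | ichoice {n U} {P Q : Proc Act} : WF n U P → WF n U Q → WF n U (Proc.ichoice P Q)
  | echoice {n U} {P Q : Proc Act} : WF n U P → WF n U Q → WF n U (Proc.echoice P Q)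
  | var {n U m} : m < n → U m → WF n U (Proc.var m : Proc Act)
  | recur {n U} {P : Proc Act} : WF (n+1) (fun k => ∃ j, k = j + 1 ∧ U j) P → WF n U (Proc.recur P)

/-- Closed, guarded session types. -/
def WF0 {Act : Type} (P : Proc Act) : Prop := WF 0 (fun _ => False) P

/-- Labels of the event structures and of the turn-based semantics:
inputs `a`, outputs `ā`, and the success label ✓. -/
inductive Lbl (Act : Type) where
  | inp : Act → Lbl Act
  | out : Act → Lbl Act
  | tick : Lbl Act

/-- Turn-based labelled semantics with one-position buffers (recursion unfolded tacitly). -/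
inductive TStep {Act : Type} : Proc Act × Proc Act → Lbl Act → Proc Act × Proc Act → Prop where
  | outL {P P' R : Proc Act} {a : Act} : IBr P a P' → TStep (P, R) (Lbl.out a) (Proc.buf a P', R)
  | outR {P R R' : Proc Act} {a : Act} : IBr R a R' → TStep (P, R) (Lbl.out a) (P, Proc.buf a R')
  | inL {P P' R : Proc Act} {a : Act} : EBr P a P' → TStep (P, Proc.buf a R) (Lbl.inp a) (P', R)
  | inR {P R R' : Proc Act} {a : Act} : EBr R a R' → TStep (Proc.buf a P, R) (Lbl.inp a) (P, R')
  | tickL {P : Proc Act} : TStep (Proc.success, P) Lbl.tick (Proc.zero, P)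
  | tickR {P : Proc Act} : TStep (P, Proc.success) Lbl.tick (P, Proc.zero)
  | unfL {P Q c l} : TStep (subst (Proc.recur P) 0 P, Q) l c → TStep (Proc.recur P, Q) l c
  | unfR {P Q c l} : TStep (P, subst (Proc.recur Q) 0 Q) l c → TStep (P, Proc.recur Q) l c

/-! ### ES denotation of session types -/

/-- Canonical event renaming used for freshness: prepend `n` to the path. -/
def shiftE {Ppt : Type} (n : ℕ) : Ppt × List ℕ → Ppt × List ℕ := fun e => (e.1, n :: e.2)

/-- Rename all events of `E` by `shiftE n`. -/
def shiftES {Ppt Act : Type} (n : ℕ) (E : LES (Ppt × List ℕ) Act) : LES (Ppt × List ℕ) Act :=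
  ⟨shiftE n '' E.events,
   fun e e' => ∃ d d', e = shiftE n d ∧ e' = shiftE n d' ∧ E.conf d d',
   fun X e => ∃ Y d, X = shiftE n '' Y ∧ e = shiftE n d ∧ E.enab Y d,
   fun e a => ∃ d, e = shiftE n d ∧ E.lab d a⟩

/-- Prefixing with a fresh event `ea` labelled `α`. -/
def prefixES {Ev Act : Type} (ea : Ev) (α : Act) (E : LES Ev Act) : LES Ev Act :=
  ⟨insert ea E.events, E.conf,
   fun X e => (X = ∅ ∧ e = ea) ∨ ∃ Y, E.enab Y e ∧ X = insert ea Y,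
   fun e a => (e = ea ∧ a = α) ∨ E.lab e a⟩

/-- Choice: disjoint union with initial events of different branches in conflict. -/
def choiceES {Ev Act : Type} (E1 E2 : LES Ev Act) : LES Ev Act :=
  ⟨E1.events ∪ E2.events,
   fun e e' => E1.conf e e' ∨ E2.conf e e' ∨
     (E1.enab ∅ e ∧ E2.enab ∅ e') ∨ (E2.enab ∅ e ∧ E1.enab ∅ e'),
   fun X e => E1.enab X e ∨ E2.enab X e,
   fun e a => E1.lab e a ∨ E2.lab e a⟩

/-- Denotation of ✓: a single ✓-labelled enabled event of `A`. -/
def successES {Ppt Act : Type} (A : Ppt) : LES (Ppt × List ℕ) (Lbl Act) :=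
  ⟨{(A, ([] : List ℕ))}, fun _ _ => False,
   fun X e => X = ∅ ∧ e = (A, []),
   fun e l => e = (A, []) ∧ l = Lbl.tick⟩

/-- Extend an environment with a new denotation for variable 0. -/
def consEnv {Ev Act : Type} (E : LES Ev Act) (ρ : ℕ → LES Ev Act) : ℕ → LES Ev Act
  | 0 => E
  | k + 1 => ρ k

/-- ES denotation `⟦P⟧_A ρ` of a session type, all events owned by `A`. -/
def semST {Act Ppt : Type} (A : Ppt) :
    (ℕ → LES (Ppt × List ℕ) (Lbl Act)) → Proc Act → LES (Ppt × List ℕ) (Lbl Act)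
  | _, .success => successES A
  | ρ, .send a P => prefixES (A, []) (Lbl.out a) (shiftES 0 (semST A ρ P))
  | ρ, .recv a P => prefixES (A, []) (Lbl.inp a) (shiftES 0 (semST A ρ P))
  | ρ, .ichoice P Q => choiceES (shiftES 0 (semST A ρ P)) (shiftES 1 (semST A ρ Q))
  | ρ, .echoice P Q => choiceES (shiftES 0 (semST A ρ P)) (shiftES 1 (semST A ρ Q))
  | ρ, .var m => ρ m
  | ρ, .recur P => fixES (fun E => semST A (consEnv E ρ) P)
  | _, .comm _ _ => emptyES
  | _, .buf _ _ => emptyES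
  | _, .zero => emptyES

/-- The complementary label. -/
def coLbl {Act : Type} : Lbl Act → Lbl Act
  | .inp a => .out a
  | .out a => .inp a
  | .tick => .tick

/-- Co-actions (outputs and ✓). -/
def isCo {Act : Type} : Lbl Act → Prop
  | .inp _ => False
  | _ => True

/-- `e'` (in `Ei`) is matched by the synchronizing event `e''` (in `Ej`). -/
def LabMatch {Ev Act : Type} (Ei Ej : LES Ev (Lbl Act)) (e' e'' : Ev) : Prop :=
  ∃ l, Ei.lab e' l ∧ Ej.lab e'' (coLbl l)

/-- Composed enabling for a co-action event of side `i`. -/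
def parEnabCo {Ev Act : Type} (Ei Ej : LES Ev (Lbl Act)) (Z : Set Ev) (e : Ev) : Prop :=
  ∃ X Y, Ei.enab X e ∧ (∃ l, Ei.lab e l ∧ isCo l) ∧ Y ⊆ Ej.events ∧
    (∀ e' ∈ X, ∃ e'' ∈ Y, LabMatch Ei Ej e' e'') ∧ Z = X ∪ Y

/-- Composed enabling for an input event of side `i` (needs its own co-event `eh`). -/
def parEnabIn {Ev Act : Type} (Ei Ej : LES Ev (Lbl Act)) (Z : Set Ev) (e : Ev) : Prop :=
  ∃ X Y eh a, Ei.enab X e ∧ Ei.lab e (Lbl.inp a) ∧ Y ⊆ Ej.events ∧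
    eh ∈ Ej.events ∧ Ej.lab eh (Lbl.out a) ∧
    (∀ e' ∈ X, ∃ e'' ∈ Y, LabMatch Ei Ej e' e'') ∧ Z = X ∪ Y ∪ {eh}

/-- ES denotation of a composition `P₁ ∥ P₂`, given the two sides. -/
def parES {Ev Act : Type} (E1 E2 : LES Ev (Lbl Act)) : LES Ev (Lbl Act) :=
  ⟨E1.events ∪ E2.events,
   fun e e' => E1.conf e e' ∨ E2.conf e e',
   fun Z e => parEnabCo E1 E2 Z e ∨ parEnabCo E2 E1 Z e ∨
              parEnabIn E1 E2 Z e ∨ parEnabIn E2 E1 Z e,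
   fun e l => E1.lab e l ∨ E2.lab e l⟩

/-- Transitions of the LTS `ETS(E)`: fire an `∅`-enabled event, pass to the remainder. -/
def ETStep {Ev Act : Type} (E : LES Ev Act) (l : Act) (E' : LES Ev Act) : Prop :=
  ∃ e, E.enab ∅ e ∧ E.lab e l ∧ E' = remainder E e

/-- Payoff of `A`: finite plays must contain a ✓-labelled event of `A`. -/
def payoffOf {Act Ppt : Type} (A : Ppt) (E : LES (Ppt × List ℕ) (Lbl Act)) :
    Set (ℕ → Option (Ppt × List ℕ)) :=
  {σ | (∃ i, σ i = none) → ∃ j e, σ j = some e ∧ e.1 = A ∧ E.lab e Lbl.tick}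

/-- The contract `𝓒_A(P)` of a session type. -/
noncomputable def contractOf {Act Ppt : Type} [DecidableEq Ppt] (A : Ppt) (P : Proc Act) :
    Contract (Ppt × List ℕ) (Lbl Act) Ppt :=
  ⟨semST A (fun _ => emptyES) P,
   fun X => if X = A then some (payoffOf A (semST A (fun _ => emptyES) P)) else none⟩

/-- Composition of (session-type) contracts: the game is played on the composed ES. -/
noncomputable def ccomp {Ev Act Ppt : Type} (C C' : Contract Ev (Lbl Act) Ppt) :
    Contract Ev (Lbl Act) Ppt :=
  ⟨parES C.es C'.es, fun X => (C.payoff X).orElse (fun _ => C'.payoff X)⟩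

/-- Recursion-free (and variable-free) session types. -/
inductive NoRec {Act : Type} : Proc Act → Prop where
  | success : NoRec (Proc.success : Proc Act)
  | send {a : Act} {P} : NoRec P → NoRec (Proc.send a P)
  | recv {a : Act} {P} : NoRec P → NoRec (Proc.recv a P)
  | ichoice {P Q : Proc Act} : NoRec P → NoRec Q → NoRec (Proc.ichoice P Q)
  | echoice {P Q : Proc Act} : NoRec P → NoRec Q → NoRec (Proc.echoice P Q)

end ESC

namespace ESC

section Aux

variable {Act : Type}

/-- One top-level unfolding of a recursive type. -/
def unf1 (x y : Proc Act) : Prop :=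
  ∃ R, x = Proc.recur R ∧ y = subst (Proc.recur R) 0 R

/-- Iterated top-level unfolding. -/
def unfS : Proc Act → Proc Act → Prop := Relation.ReflTransGen unf1

lemma WFweaken {n : ℕ} {U : ℕ → Prop} {P : Proc Act} (h : WF n U P) :
    ∀ {n' : ℕ} {V : ℕ → Prop}, n ≤ n' → (∀ m, m < n → U m → V m) → WF n' V P := by
  induction h with
  | success => intro n' V _ _; exact WF.success
  | send _ ih => intro n' V hle _; exact WF.send (ih hle (fun _ _ _ => trivial))
  | recv _ ih => intro n' V hle _; exact WF.recv (ih hle (fun _ _ _ => trivial))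
  | ichoice _ _ ih1 ih2 => intro n' V hle hUV; exact WF.ichoice (ih1 hle hUV) (ih2 hle hUV)
  | echoice _ _ ih1 ih2 => intro n' V hle hUV; exact WF.echoice (ih1 hle hUV) (ih2 hle hUV)
  | var hm hU => intro n' V hle hUV; exact WF.var (lt_of_lt_of_le hm hle) (hUV _ hm hU)
  | recur _ ih =>
    intro n' V hle hUV
    refine WF.recur (ih (Nat.succ_le_succ hle) ?_)
    rintro m hm ⟨j, rfl, hUj⟩
    exact ⟨j, rfl, hUV j (by omega) hUj⟩

lemma substWF {n : ℕ} {U : ℕ → Prop} {P : Proc Act} (h : WF n U P) :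
    ∀ {Q : Proc Act}, WF0 Q → ∀ k, n = k + 1 → WF k U (subst Q k P) := by
  induction h with
  | success => intro Q hQ k hk; exact WF.success
  | send _ ih => intro Q hQ k hk; exact WF.send (ih hQ k hk)
  | recv _ ih => intro Q hQ k hk; exact WF.recv (ih hQ k hk)
  | ichoice _ _ ih1 ih2 => intro Q hQ k hk; exact WF.ichoice (ih1 hQ k hk) (ih2 hQ k hk)
  | echoice _ _ ih1 ih2 => intro Q hQ k hk; exact WF.echoice (ih1 hQ k hk) (ih2 hQ k hk)
  | @var n U m hm hU =>
    intro Q hQ k hk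
    simp only [subst]
    by_cases hmk : m = k
    · rw [if_pos hmk]
      exact WFweaken hQ (Nat.zero_le _) (fun m hm _ => absurd hm (Nat.not_lt_zero m))
    · rw [if_neg hmk]
      exact WF.var (by omega) hU
  | recur _ ih =>
    intro Q hQ k hk
    exact WF.recur (ih hQ (k + 1) (by omega))

lemma WF0_unf1 {x y : Proc Act} (h : unf1 x y) (hx : WF0 x) : WF0 y := by
  obtain ⟨R, rfl, rfl⟩ := h
  have hx' := hx
  cases hx' with
  | recur h' =>
    exact WFweaken (substWF h' hx 0 rfl) le_rfl (fun m hm _ => absurd hm (Nat.not_lt_zero m))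

lemma WF0_unfS {t s : Proc Act} (h : unfS t s) (ht : WF0 t) : WF0 s := by
  induction h with
  | refl => exact ht
  | tail _ h1 ih => exact WF0_unf1 h1 ih

lemma IBr_WF {P : Proc Act} {a : Act} {P' : Proc Act} (h : IBr P a P') :
    ∀ {n U}, WF n U P → WF n (fun _ => True) P' := by
  induction h with
  | send => intro n U hw; cases hw with | send h => exact h
  | il _ ih => intro n U hw; cases hw with | ichoice h1 h2 => exact ih h1
  | ir _ ih => intro n U hw; cases hw with | ichoice h1 h2 => exact ih h2

lemma EBr_WF {P : Proc Act} {a : Act} {P' : Proc Act} (h : EBr P a P') :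
    ∀ {n U}, WF n U P → WF n (fun _ => True) P' := by
  induction h with
  | recv => intro n U hw; cases hw with | recv h => exact h
  | el _ ih => intro n U hw; cases hw with | echoice h1 h2 => exact ih h1
  | er _ ih => intro n U hw; cases hw with | echoice h1 h2 => exact ih h2

lemma IBr_WF0 {P : Proc Act} {a : Act} {P' : Proc Act} (h : IBr P a P') (hw : WF0 P) :
    WF0 P' :=
  WFweaken (IBr_WF h hw) le_rfl (fun m hm _ => absurd hm (Nat.not_lt_zero m))

lemma EBr_WF0 {P : Proc Act} {a : Act} {P' : Proc Act} (h : EBr P a P') (hw : WF0 P) :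
    WF0 P' :=
  WFweaken (EBr_WF h hw) le_rfl (fun m hm _ => absurd hm (Nat.not_lt_zero m))

lemma IBr_nonrecur {P : Proc Act} {a : Act} {P' : Proc Act} (h : IBr P a P') :
    ∀ R, P ≠ Proc.recur R := by
  cases h <;> intro R hR <;> exact nomatch hR

lemma EBr_nonrecur {P : Proc Act} {a : Act} {P' : Proc Act} (h : EBr P a P') :
    ∀ R, P ≠ Proc.recur R := by
  cases h <;> intro R hR <;> exact nomatch hR

/-- Number of leading `recur` binders. -/
def spine : Proc Act → ℕ
  | .recur P => spine P + 1
  | _ => 0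

lemma spineSubst {n : ℕ} {U : ℕ → Prop} {P : Proc Act} (h : WF n U P)
    (hU : ∀ m, ¬ U m) : ∀ (Q : Proc Act) (k : ℕ), spine (subst Q k P) = spine P := by
  induction h with
  | success => intro Q k; rfl
  | send => intro Q k; rfl
  | recv => intro Q k; rfl
  | ichoice => intro Q k; rfl
  | echoice => intro Q k; rfl
  | var hm hUm => exact absurd hUm (hU _)
  | @recur n U P _ ih =>
    intro Q k
    have hU' : ∀ m, ¬ (∃ j, m = j + 1 ∧ U j) := by
      rintro m ⟨j, rfl, hj⟩; exact hU j hj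
    show spine (Proc.recur (subst Q (k+1) P)) = spine (Proc.recur P)
    simp [spine, ih hU' Q (k+1)]

lemma fullUnfoldAux : ∀ (n : ℕ) (s : Proc Act), spine s ≤ n → WF0 s →
    ∃ R, unfS s R ∧ ∀ P, R ≠ Proc.recur P := by
  intro n
  induction n with
  | zero =>
    intro s hs hw
    refine ⟨s, Relation.ReflTransGen.refl, ?_⟩
    rintro P rfl
    simp [spine] at hs
  | succ n ih =>
    intro s hs hw
    by_cases hrec : ∃ P, s = Proc.recur P
    · obtain ⟨P, rfl⟩ := hrec
      have h1 : WF0 (subst (Proc.recur P) 0 P) := WF0_unf1 ⟨P, rfl, rfl⟩ hw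
      have hsp : spine (subst (Proc.recur P) 0 P) = spine P := by
        cases hw with
        | recur h' =>
          exact spineSubst h' (by rintro m ⟨j, rfl, hj⟩; exact hj) _ 0
      have hle : spine (subst (Proc.recur P) 0 P) ≤ n := by
        have : spine (Proc.recur P) = spine P + 1 := rfl
        omega
      obtain ⟨R, hR, hnr⟩ := ih _ hle h1
      exact ⟨R, Relation.ReflTransGen.head ⟨P, rfl, rfl⟩ hR, hnr⟩
    · exact ⟨s, Relation.ReflTransGen.refl, fun P hP => hrec ⟨P, hP⟩⟩

lemma unfS_nonrecur {t s : Proc Act} (h : unfS t s) (hn : ∀ P, t ≠ Proc.recur P) :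
    s = t := by
  rcases Relation.ReflTransGen.cases_head h with heq | ⟨z, ⟨R, hR, _⟩, _⟩
  · exact heq.symm
  · exact absurd hR (hn R)

lemma liftL {t s u : Proc Act} {l : Lbl Act} {c : Proc Act × Proc Act}
    (h : unfS t s) (hs : TStep (s, u) l c) : TStep (t, u) l c := by
  induction h using Relation.ReflTransGen.head_induction_on with
  | refl => exact hs
  | head h1 _ ih =>
    obtain ⟨R, rfl, rfl⟩ := h1
    exact TStep.unfL ih

lemma liftR {t s u : Proc Act} {l : Lbl Act} {c : Proc Act × Proc Act}
    (h : unfS t s) (hs : TStep (u, s) l c) : TStep (u, t) l c := by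
  induction h using Relation.ReflTransGen.head_induction_on with
  | refl => exact hs
  | head h1 _ ih =>
    obtain ⟨R, rfl, rfl⟩ := h1
    exact TStep.unfR ih

lemma unfS_stepL {s s' y : Proc Act} (h : unfS s s') :
    Relation.ReflTransGen Step (s, y) (s', y) := by
  induction h using Relation.ReflTransGen.head_induction_on with
  | refl => exact Relation.ReflTransGen.refl
  | head h1 _ ih =>
    obtain ⟨R, rfl, rfl⟩ := h1
    exact Relation.ReflTransGen.head Step.unfoldL ih

lemma unfS_stepR {s s' y : Proc Act} (h : unfS s s') :
    Relation.ReflTransGen Step (y, s) (y, s') := by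
  induction h using Relation.ReflTransGen.head_induction_on with
  | refl => exact Relation.ReflTransGen.refl
  | head h1 _ ih =>
    obtain ⟨R, rfl, rfl⟩ := h1
    exact Relation.ReflTransGen.head Step.unfoldR ih

lemma canStep : ∀ {p : Proc Act × Proc Act} {l : Lbl Act} {c : Proc Act × Proc Act},
    TStep p l c → ∀ s v, unfS p.1 s → unfS p.2 v → ∃ l' c', TStep (s, v) l' c' := by
  intro p l c h
  induction h with
  | @outL P P' R a hbr =>
    intro s v hs hv
    have := unfS_nonrecur hs (IBr_nonrecur hbr)
    subst this
    exact ⟨_, _, TStep.outL hbr⟩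
  | @outR P R R' a hbr =>
    intro s v hs hv
    have := unfS_nonrecur hv (IBr_nonrecur hbr)
    subst this
    exact ⟨_, _, TStep.outR hbr⟩
  | @inL P P' R a hbr =>
    intro s v hs hv
    have hs' := unfS_nonrecur hs (EBr_nonrecur hbr)
    have hv' := unfS_nonrecur hv (fun R hR => nomatch hR)
    subst hs'; subst hv'
    exact ⟨_, _, TStep.inL hbr⟩
  | @inR P R R' a hbr =>
    intro s v hs hv
    have hs' := unfS_nonrecur hs (fun R hR => nomatch hR)
    have hv' := unfS_nonrecur hv (EBr_nonrecur hbr)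
    subst hs'; subst hv'
    exact ⟨_, _, TStep.inR hbr⟩
  | tickL =>
    intro s v hs hv
    have := unfS_nonrecur hs (fun R hR => nomatch hR)
    subst this
    exact ⟨_, _, TStep.tickL⟩
  | tickR =>
    intro s v hs hv
    have := unfS_nonrecur hv (fun R hR => nomatch hR)
    subst this
    exact ⟨_, _, TStep.tickR⟩
  | @unfL P Q c l hpre ih =>
    intro s v hs hv
    rcases Relation.ReflTransGen.cases_head hs with heq | ⟨z, hz, hzs⟩
    · obtain ⟨l', c', h'⟩ := ih (subst (Proc.recur P) 0 P) v Relation.ReflTransGen.refl hv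
      subst heq
      exact ⟨l', c', TStep.unfL h'⟩
    · obtain ⟨R, hR, rfl⟩ := hz
      have hPR : P = R := by injection hR
      subst hPR
      exact ih s v hzs hv
  | @unfR P Q c l hpre ih =>
    intro s v hs hv
    rcases Relation.ReflTransGen.cases_head hv with heq | ⟨z, hz, hzs⟩
    · obtain ⟨l', c', h'⟩ := ih s (subst (Proc.recur Q) 0 Q) hs Relation.ReflTransGen.refl
      subst heq
      exact ⟨l', c', TStep.unfR h'⟩
    · obtain ⟨R, hR, rfl⟩ := hz
      have hQR : Q = R := by injection hR
      subst hQR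
      exact ih s v hs hzs

/-- Correspondence between a standard-semantics process and a turn-based one. -/
inductive CRel : Proc Act → Proc Act → Prop
  | unf {s t : Proc Act} : WF0 t → unfS t s → CRel s t
  | cb {a : Act} {p : Proc Act} : WF0 p → CRel (Proc.comm a p) (Proc.buf a p)
  | sz : CRel Proc.success Proc.zero

lemma S2T : ∀ {x x' : Proc Act × Proc Act}, Step x x' →
    ∀ {t : Proc Act × Proc Act}, CRel x.1 t.1 → CRel x.2 t.2 →
    ∃ t', Relation.ReflTransGen (fun a b => ∃ l, TStep a l b) t t' ∧
      CRel x'.1 t'.1 ∧ CRel x'.2 t'.2 := by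
  intro x x' h
  cases h with
  | @commitL P P' Q a hbr =>
    rintro ⟨t₁, t₂⟩ h1 h2
    cases h1 with
    | unf hw hu =>
      have hwP : WF0 P := WF0_unfS hu hw
      exact ⟨(Proc.buf a P', t₂),
        Relation.ReflTransGen.single ⟨_, liftL hu (TStep.outL hbr)⟩,
        CRel.cb (IBr_WF0 hbr hwP), h2⟩
    | cb _ => exact absurd hbr (by intro h; cases h)
    | sz => exact absurd hbr (by intro h; cases h)
  | @commitR P Q Q' a hbr =>
    rintro ⟨t₁, t₂⟩ h1 h2
    cases h2 with
    | unf hw hu =>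
      have hwQ : WF0 Q := WF0_unfS hu hw
      exact ⟨(t₁, Proc.buf a Q'),
        Relation.ReflTransGen.single ⟨_, liftR hu (TStep.outR hbr)⟩,
        h1, CRel.cb (IBr_WF0 hbr hwQ)⟩
    | cb _ => exact absurd hbr (by intro h; cases h)
    | sz => exact absurd hbr (by intro h; cases h)
  | @unfoldL P Q =>
    rintro ⟨t₁, t₂⟩ h1 h2
    cases h1 with
    | unf hw hu =>
      exact ⟨(t₁, t₂), Relation.ReflTransGen.refl,
        CRel.unf hw (hu.tail ⟨P, rfl, rfl⟩), h2⟩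
  | @unfoldR P Q =>
    rintro ⟨t₁, t₂⟩ h1 h2
    cases h2 with
    | unf hw hu =>
      exact ⟨(t₁, t₂), Relation.ReflTransGen.refl,
        h1, CRel.unf hw (hu.tail ⟨Q, rfl, rfl⟩)⟩
  | @syncL P Q Q' a hbr =>
    rintro ⟨t₁, t₂⟩ h1 h2
    cases h1 with
    | unf hw hu => exact absurd (WF0_unfS hu hw) (by intro h; cases h)
    | cb hp =>
      cases h2 with
      | unf hw2 hu2 =>
        exact ⟨(P, Q'),
          Relation.ReflTransGen.single ⟨_, liftR hu2 (TStep.inR hbr)⟩,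
          CRel.unf hp Relation.ReflTransGen.refl,
          CRel.unf (EBr_WF0 hbr (WF0_unfS hu2 hw2)) Relation.ReflTransGen.refl⟩
      | cb _ => exact absurd hbr (by intro h; cases h)
      | sz => exact absurd hbr (by intro h; cases h)
  | @syncR P P' Q a hbr =>
    rintro ⟨t₁, t₂⟩ h1 h2
    cases h2 with
    | unf hw hu => exact absurd (WF0_unfS hu hw) (by intro h; cases h)
    | cb hp =>
      cases h1 with
      | unf hw1 hu1 =>
        exact ⟨(P', Q),
          Relation.ReflTransGen.single ⟨_, liftL hu1 (TStep.inL hbr)⟩,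
          CRel.unf (EBr_WF0 hbr (WF0_unfS hu1 hw1)) Relation.ReflTransGen.refl,
          CRel.unf hp Relation.ReflTransGen.refl⟩
      | cb _ => exact absurd hbr (by intro h; cases h)
      | sz => exact absurd hbr (by intro h; cases h)

lemma T2S : ∀ {t : Proc Act × Proc Act} {l : Lbl Act} {t' : Proc Act × Proc Act},
    TStep t l t' → ∀ {x : Proc Act × Proc Act}, CRel x.1 t.1 → CRel x.2 t.2 →
    ∃ s', Relation.ReflTransGen Step x s' ∧ CRel s'.1 t'.1 ∧ CRel s'.2 t'.2 := by
  intro t l t' h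
  induction h with
  | @outL P P' R a hbr =>
    rintro ⟨s₁, s₂⟩ h1 h2
    cases h1 with
    | unf hw hu =>
      have hs := unfS_nonrecur hu (IBr_nonrecur hbr)
      subst hs
      exact ⟨(Proc.comm a P', s₂), Relation.ReflTransGen.single (Step.commitL hbr),
        CRel.cb (IBr_WF0 hbr hw), h2⟩
    | cb _ => exact absurd hbr (by intro h; cases h)
    | sz => exact absurd hbr (by intro h; cases h)
  | @outR P R R' a hbr =>
    rintro ⟨s₁, s₂⟩ h1 h2
    cases h2 with
    | unf hw hu =>
      have hs := unfS_nonrecur hu (IBr_nonrecur hbr)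
      subst hs
      exact ⟨(s₁, Proc.comm a R'), Relation.ReflTransGen.single (Step.commitR hbr),
        h1, CRel.cb (IBr_WF0 hbr hw)⟩
    | cb _ => exact absurd hbr (by intro h; cases h)
    | sz => exact absurd hbr (by intro h; cases h)
  | @inL P P' R a hbr =>
    rintro ⟨s₁, s₂⟩ h1 h2
    cases h2 with
    | unf hw hu => exact absurd hw (by intro h; cases h)
    | cb hp =>
      cases h1 with
      | unf hw1 hu1 =>
        have hs := unfS_nonrecur hu1 (EBr_nonrecur hbr)
        subst hs
        exact ⟨(P', R), Relation.ReflTransGen.single (Step.syncR hbr),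
          CRel.unf (EBr_WF0 hbr hw1) Relation.ReflTransGen.refl,
          CRel.unf hp Relation.ReflTransGen.refl⟩
      | cb _ => exact absurd hbr (by intro h; cases h)
      | sz => exact absurd hbr (by intro h; cases h)
  | @inR P R R' a hbr =>
    rintro ⟨s₁, s₂⟩ h1 h2
    cases h1 with
    | unf hw hu => exact absurd hw (by intro h; cases h)
    | cb hp =>
      cases h2 with
      | unf hw2 hu2 =>
        have hs := unfS_nonrecur hu2 (EBr_nonrecur hbr)
        subst hs
        exact ⟨(P, R'), Relation.ReflTransGen.single (Step.syncL hbr),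
          CRel.unf hp Relation.ReflTransGen.refl,
          CRel.unf (EBr_WF0 hbr hw2) Relation.ReflTransGen.refl⟩
      | cb _ => exact absurd hbr (by intro h; cases h)
      | sz => exact absurd hbr (by intro h; cases h)
  | @tickL R =>
    rintro ⟨s₁, s₂⟩ h1 h2
    cases h1 with
    | unf hw hu =>
      have hs := unfS_nonrecur hu (fun R hR => nomatch hR)
      subst hs
      exact ⟨(Proc.success, s₂), Relation.ReflTransGen.refl, CRel.sz, h2⟩
  | @tickR R =>
    rintro ⟨s₁, s₂⟩ h1 h2
    cases h2 with
    | unf hw hu =>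
      have hs := unfS_nonrecur hu (fun R hR => nomatch hR)
      subst hs
      exact ⟨(s₁, Proc.success), Relation.ReflTransGen.refl, h1, CRel.sz⟩
  | @unfL R Q c l hpre ih =>
    rintro ⟨s₁, s₂⟩ h1 h2
    cases h1 with
    | unf hw hu =>
      have hw' : WF0 (subst (Proc.recur R) 0 R) := WF0_unf1 ⟨R, rfl, rfl⟩ hw
      rcases Relation.ReflTransGen.cases_head hu with heq | ⟨z, hz, hzs⟩
      · subst heq
        obtain ⟨s', hs', hc1, hc2⟩ :=
          ih (x := (subst (Proc.recur R) 0 R, s₂))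
            (CRel.unf hw' Relation.ReflTransGen.refl) h2
        exact ⟨s', Relation.ReflTransGen.head Step.unfoldL hs', hc1, hc2⟩
      · obtain ⟨R', hR', rfl⟩ := hz
        have hRR : R = R' := by injection hR'
        subst hRR
        exact ih (x := (s₁, s₂)) (CRel.unf hw' hzs) h2
  | @unfR P R c l hpre ih =>
    rintro ⟨s₁, s₂⟩ h1 h2
    cases h2 with
    | unf hw hu =>
      have hw' : WF0 (subst (Proc.recur R) 0 R) := WF0_unf1 ⟨R, rfl, rfl⟩ hw
      rcases Relation.ReflTransGen.cases_head hu with heq | ⟨z, hz, hzs⟩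
      · subst heq
        obtain ⟨s', hs', hc1, hc2⟩ :=
          ih (x := (s₁, subst (Proc.recur R) 0 R)) h1
            (CRel.unf hw' Relation.ReflTransGen.refl)
        exact ⟨s', Relation.ReflTransGen.head Step.unfoldR hs', hc1, hc2⟩
      · obtain ⟨R', hR', rfl⟩ := hz
        have hRR : R = R' := by injection hR'
        subst hRR
        exact ih (x := (s₁, s₂)) h1 (CRel.unf hw' hzs)

lemma simS2T {x y : Proc Act × Proc Act} (h : Relation.ReflTransGen Step x y) :
    ∀ {t : Proc Act × Proc Act}, CRel x.1 t.1 → CRel x.2 t.2 →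
    ∃ t', Relation.ReflTransGen (fun a b => ∃ l, TStep a l b) t t' ∧
      CRel y.1 t'.1 ∧ CRel y.2 t'.2 := by
  induction h with
  | refl => exact fun h1 h2 => ⟨_, Relation.ReflTransGen.refl, h1, h2⟩
  | tail _ hstep ih =>
    intro t h1 h2
    obtain ⟨t', ht', hc1, hc2⟩ := ih h1 h2
    obtain ⟨t'', ht'', hc1', hc2'⟩ := S2T hstep hc1 hc2
    exact ⟨t'', ht'.trans ht'', hc1', hc2'⟩

lemma simT2S {t τ : Proc Act × Proc Act}
    (h : Relation.ReflTransGen (fun a b => ∃ l, TStep a l b) t τ) :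
    ∀ {x : Proc Act × Proc Act}, CRel x.1 t.1 → CRel x.2 t.2 →
    ∃ c, Relation.ReflTransGen Step x c ∧ CRel c.1 τ.1 ∧ CRel c.2 τ.2 := by
  induction h with
  | refl => exact fun h1 h2 => ⟨_, Relation.ReflTransGen.refl, h1, h2⟩
  | tail _ hstep ih =>
    intro x h1 h2
    obtain ⟨c, hc, hc1, hc2⟩ := ih h1 h2
    obtain ⟨l, hl⟩ := hstep
    obtain ⟨c', hc', hc1', hc2'⟩ := T2S hl hc1 hc2
    exact ⟨c', hc.trans hc', hc1', hc2'⟩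

end Aux

/-- Compliance is characterized by the turn-based semantics: `P ⊣ Q` iff every
maximal turn-based reduction of `P ∥ Q` ends with the client equal to `0`. -/
theorem compliance_iff_turnBased {Act : Type} (P Q : Proc Act)
    (hP : WF0 P) (hQ : WF0 Q) :
    Compliant P Q ↔
      ∀ c, Relation.ReflTransGen (fun x y => ∃ l, TStep x l y) (P, Q) c →
        (∀ l c', ¬ TStep c l c') → c.1 = Proc.zero := by
  constructor
  · -- Compliance implies the turn-based characterization
    intro hcomp τ hreach hstuck
    obtain ⟨τ₁, τ₂⟩ := τ
    obtain ⟨c, hc, hc1, hc2⟩ := simT2S hreach (x := (P, Q))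
      (CRel.unf hP Relation.ReflTransGen.refl) (CRel.unf hQ Relation.ReflTransGen.refl)
    -- fully unfold both components of c
    have side : ∀ s t : Proc Act, CRel s t →
        ∃ s', unfS s s' ∧ (∀ R, s' ≠ Proc.recur R) ∧ CRel s' t := by
      intro s t h
      cases h with
      | unf hw hu =>
        obtain ⟨R, hR, hnr⟩ := fullUnfoldAux (spine s) s le_rfl (WF0_unfS hu hw)
        exact ⟨R, hR, hnr, CRel.unf hw (hu.trans hR)⟩
      | cb hp =>
        exact ⟨_, Relation.ReflTransGen.refl, (fun R hR => nomatch hR), CRel.cb hp⟩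
      | sz =>
        exact ⟨_, Relation.ReflTransGen.refl, (fun R hR => nomatch hR), CRel.sz⟩
    obtain ⟨u₁, hu1, hnr1, hcr1⟩ := side _ _ hc1
    obtain ⟨u₂, hu2, hnr2, hcr2⟩ := side _ _ hc2
    have hreachS : Relation.ReflTransGen Step (P, Q) (u₁, u₂) := by
      refine hc.trans ?_
      have h1 : Relation.ReflTransGen Step (c.1, c.2) (u₁, c.2) := unfS_stepL hu1
      have h2 : Relation.ReflTransGen Step (u₁, c.2) (u₁, u₂) := unfS_stepR hu2
      rw [Prod.mk.eta] at h1
      exact h1.trans h2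
    have hstuckS : Stuck (u₁, u₂) := by
      intro c'' hstep
      cases hstep with
      | commitL hbr =>
        cases hcr1 with
        | unf hw hu => exact hstuck _ _ (liftL hu (TStep.outL hbr))
        | cb _ => exact absurd hbr (by intro h; cases h)
        | sz => exact absurd hbr (by intro h; cases h)
      | commitR hbr =>
        cases hcr2 with
        | unf hw hu => exact hstuck _ _ (liftR hu (TStep.outR hbr))
        | cb _ => exact absurd hbr (by intro h; cases h)
        | sz => exact absurd hbr (by intro h; cases h)
      | unfoldL => exact hnr1 _ rfl
      | unfoldR => exact hnr2 _ rfl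
      | syncL hbr =>
        cases hcr1 with
        | unf hw hu => exact absurd (WF0_unfS hu hw) (by intro h; cases h)
        | cb hp =>
          cases hcr2 with
          | unf hw2 hu2 => exact hstuck _ _ (liftR hu2 (TStep.inR hbr))
          | cb _ => exact absurd hbr (by intro h; cases h)
          | sz => exact absurd hbr (by intro h; cases h)
      | syncR hbr =>
        cases hcr2 with
        | unf hw hu => exact absurd (WF0_unfS hu hw) (by intro h; cases h)
        | cb hp =>
          cases hcr1 with
          | unf hw1 hu1 => exact hstuck _ _ (liftL hu1 (TStep.inL hbr))
          | cb _ => exact absurd hbr (by intro h; cases h)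
          | sz => exact absurd hbr (by intro h; cases h)
    have hsucc : u₁ = Proc.success := hcomp _ hreachS hstuckS
    subst hsucc
    cases hcr1 with
    | unf hw hu => exact absurd (liftL hu TStep.tickL) (hstuck _ _)
    | sz => rfl
  · -- turn-based characterization implies compliance
    intro hT c hreach hstuckS
    obtain ⟨c₁, c₂⟩ := c
    obtain ⟨τ, hτ, hc1, hc2⟩ := simS2T hreach (t := (P, Q))
      (CRel.unf hP Relation.ReflTransGen.refl) (CRel.unf hQ Relation.ReflTransGen.refl)
    obtain ⟨τ₁, τ₂⟩ := τ
    have hnr1 : ∀ R, c₁ ≠ Proc.recur R := by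
      rintro R rfl; exact hstuckS _ Step.unfoldL
    have hnr2 : ∀ R, c₂ ≠ Proc.recur R := by
      rintro R rfl; exact hstuckS _ Step.unfoldR
    by_cases hc1s : c₁ = Proc.success
    · exact hc1s
    exfalso
    -- side 1: c₁ is not success
    have hσ1 : ∃ σ₁, unfS τ₁ σ₁ ∧
        ((σ₁ = c₁ ∧ WF0 c₁) ∨ ∃ a p, σ₁ = Proc.buf a p ∧ c₁ = Proc.comm a p) := by
      cases hc1 with
      | unf hw hu => exact ⟨c₁, hu, Or.inl ⟨rfl, WF0_unfS hu hw⟩⟩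
      | cb hp => exact ⟨_, Relation.ReflTransGen.refl, Or.inr ⟨_, _, rfl, rfl⟩⟩
      | sz => exact absurd rfl hc1s
    obtain ⟨σ₁, hσ1u, hσ1c⟩ := hσ1
    -- side 2: possibly do a tick first
    have hσ2 : ∃ τ₂' σ₂,
        Relation.ReflTransGen (fun a b => ∃ l, TStep a l b) (τ₁, τ₂) (τ₁, τ₂') ∧
        unfS τ₂' σ₂ ∧
        ((σ₂ = c₂ ∧ WF0 c₂ ∧ c₂ ≠ Proc.success) ∨
         (∃ a p, σ₂ = Proc.buf a p ∧ c₂ = Proc.comm a p) ∨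
         (σ₂ = Proc.zero ∧ c₂ = Proc.success)) := by
      cases hc2 with
      | unf hw hu =>
        by_cases hc2s : c₂ = Proc.success
        · subst hc2s
          exact ⟨Proc.zero, Proc.zero,
            Relation.ReflTransGen.single ⟨_, liftR hu TStep.tickR⟩,
            Relation.ReflTransGen.refl, Or.inr (Or.inr ⟨rfl, rfl⟩)⟩
        · exact ⟨τ₂, c₂, Relation.ReflTransGen.refl, hu,
            Or.inl ⟨rfl, WF0_unfS hu hw, hc2s⟩⟩
      | cb hp =>
        exact ⟨_, _, Relation.ReflTransGen.refl, Relation.ReflTransGen.refl,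
          Or.inr (Or.inl ⟨_, _, rfl, rfl⟩)⟩
      | sz =>
        exact ⟨Proc.zero, Proc.zero, Relation.ReflTransGen.refl,
          Relation.ReflTransGen.refl, Or.inr (Or.inr ⟨rfl, rfl⟩)⟩
    obtain ⟨τ₂', σ₂, hτ₂'r, hσ2u, hσ2c⟩ := hσ2
    have hreachT : Relation.ReflTransGen (fun a b => ∃ l, TStep a l b) (P, Q) (τ₁, τ₂') :=
      hτ.trans hτ₂'r
    have hTstuck : ∀ l x, ¬ TStep (τ₁, τ₂') l x := by
      intro l x hstep
      obtain ⟨l', x', hstep'⟩ := canStep hstep σ₁ σ₂ hσ1u hσ2u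
      cases hstep' with
      | outL hbr =>
        rcases hσ1c with ⟨rfl, hw⟩ | ⟨a, p, heq, rfl⟩
        · exact hstuckS _ (Step.commitL hbr)
        · subst heq; exact absurd hbr (by intro h; cases h)
      | outR hbr =>
        rcases hσ2c with ⟨rfl, hw, _⟩ | ⟨a, p, heq, rfl⟩ | ⟨heq, rfl⟩
        · exact hstuckS _ (Step.commitR hbr)
        · subst heq; exact absurd hbr (by intro h; cases h)
        · subst heq; exact absurd hbr (by intro h; cases h)
      | inL hbr =>
        rcases hσ2c with ⟨heq, hw, _⟩ | ⟨a, p, heq, hceq⟩ | ⟨heq, rfl⟩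
        · rw [← heq] at hw; exact absurd hw (by intro h; cases h)
        · rcases hσ1c with ⟨rfl, hw1⟩ | ⟨a', p', heq', rfl⟩
          · cases heq
            subst hceq
            exact hstuckS _ (Step.syncR hbr)
          · subst heq'; exact absurd hbr (by intro h; cases h)
        · exact nomatch heq
      | inR hbr =>
        rcases hσ1c with ⟨heq, hw⟩ | ⟨a, p, heq, hceq⟩
        · rw [← heq] at hw; exact absurd hw (by intro h; cases h)
        · rcases hσ2c with ⟨rfl, hw2, _⟩ | ⟨a', p', heq', rfl⟩ | ⟨heq', rfl⟩
          · cases heq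
            subst hceq
            exact hstuckS _ (Step.syncL hbr)
          · subst heq'; exact absurd hbr (by intro h; cases h)
          · subst heq'; exact absurd hbr (by intro h; cases h)
      | tickL =>
        rcases hσ1c with ⟨heq, hw⟩ | ⟨a, p, heq, hceq⟩
        · exact hc1s heq.symm
        · exact nomatch heq
      | tickR =>
        rcases hσ2c with ⟨heq, hw, hne⟩ | ⟨a, p, heq, hceq⟩ | ⟨heq, hceq⟩
        · exact hne heq.symm
        · exact nomatch heq
        · exact nomatch heq
      | unfL =>
        rcases hσ1c with ⟨heq, hw⟩ | ⟨a, p, heq, hceq⟩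
        · exact hnr1 _ heq.symm
        · exact nomatch heq
      | unfR =>
        rcases hσ2c with ⟨heq, hw, hne⟩ | ⟨a, p, heq, hceq⟩ | ⟨heq, hceq⟩
        · exact hnr2 _ heq.symm
        · exact nomatch heq
        · exact nomatch heq
    have hτ1z : τ₁ = Proc.zero := hT (τ₁, τ₂') hreachT hTstuck
    subst hτ1z
    have hσ1z : σ₁ = Proc.zero := unfS_nonrecur hσ1u (fun R hR => nomatch hR)
    subst hσ1z
    rcases hσ1c with ⟨heq, hw⟩ | ⟨a, p, heq, hceq⟩
    · rw [← heq] at hw; exact absurd hw (by intro h; cases h)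
    · exact nomatch heq

end ESC
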